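/- If SUM(X.pu) + SUM(X.rpu) < minUtil for an itemset X, then no extension Y of X (with all added items succeeding the items of X in the processing order) can have u(Y) ≥ minUtil; that is, no such extension is a potential high-utility itemset with respect to the utility condition. -/
import Mathlib


open Finset

def utilT {α ι : Type} (pr : α → ℤ) (q : α → ι → ℕ) (X : Finset α) (t : ι) : ℤ :=
  ∑ i ∈ X, pr i * (q i t : ℤ)

def totU {α ι : Type} [DecidableEq α] (D : Finset ι) (Trans : ι → Finset α)
    (pr : α → ℤ) (q : α → ι → ℕ) (X : Finset α) : ℤ :=
  ∑ t ∈ D.filter (fun t => X ⊆ Trans t), utilT pr q X t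

def puT {α ι : Type} [DecidableEq α] (pr : α → ℤ) (q : α → ι → ℕ) (Z : Finset α) (t : ι) : ℤ :=
  ∑ i ∈ Z.filter (fun i => 0 < pr i), pr i * (q i t : ℤ)

def rpuT {α ι : Type} [DecidableEq α] [LinearOrder α] (Trans : ι → Finset α)
    (pr : α → ℤ) (q : α → ι → ℕ) (Z : Finset α) (t : ι) : ℤ :=
  ∑ i ∈ (Trans t).filter (fun i => (∀ x ∈ Z, x < i) ∧ 0 < pr i), pr i * (q i t : ℤ)

def SUMpu {α ι : Type} [DecidableEq α] (D : Finset ι) (Trans : ι → Finset α)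
    (pr : α → ℤ) (q : α → ι → ℕ) (Z : Finset α) : ℤ :=
  ∑ t ∈ D.filter (fun t => Z ⊆ Trans t), puT pr q Z t

def SUMrpu {α ι : Type} [DecidableEq α] [LinearOrder α] (D : Finset ι) (Trans : ι → Finset α)
    (pr : α → ℤ) (q : α → ι → ℕ) (Z : Finset α) : ℤ :=
  ∑ t ∈ D.filter (fun t => Z ⊆ Trans t), rpuT Trans pr q Z t

theorem stmt8 {α ι : Type} [DecidableEq α] [LinearOrder α] (D : Finset ι)
    (Trans : ι → Finset α) (pr : α → ℤ) (q : α → ι → ℕ)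
    (hord : ∀ i j : α, 0 < pr i → pr j < 0 → i < j)
    (minUtil : ℤ) (X : Finset α)
    (h : SUMpu D Trans pr q X + SUMrpu D Trans pr q X < minUtil) :
    ∀ Y : Finset α, X ⊆ Y → (∀ j ∈ Y \ X, ∀ i ∈ X, i < j) →
      totU D Trans pr q Y < minUtil := by
  intro Y hXY hsucc
  have key : totU D Trans pr q Y ≤ SUMpu D Trans pr q X + SUMrpu D Trans pr q X := by
    have step1 : ∀ t ∈ D.filter (fun t => Y ⊆ Trans t),
        utilT pr q Y t ≤ puT pr q X t + rpuT Trans pr q X t := by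
      intro t ht
      simp only [mem_filter] at ht
      have hYt : Y ⊆ Trans t := ht.2
      have h1 : utilT pr q Y t ≤ ∑ i ∈ Y.filter (fun i => 0 < pr i), pr i * (q i t : ℤ) := by
        unfold utilT
        rw [← Finset.sum_filter_add_sum_filter_not Y (fun i => 0 < pr i)]
        have : ∑ i ∈ Y.filter (fun i => ¬ 0 < pr i), pr i * (q i t : ℤ) ≤ 0 := by
          apply Finset.sum_nonpos
          intro i hi
          simp only [mem_filter, not_lt] at hi
          exact mul_nonpos_of_nonpos_of_nonneg hi.2 (by positivity)
        linarith
      have hsplit : Y.filter (fun i => 0 < pr i)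
          = X.filter (fun i => 0 < pr i) ∪ (Y \ X).filter (fun i => 0 < pr i) := by
        rw [← Finset.filter_union, Finset.union_sdiff_of_subset hXY]
      have h2 : ∑ i ∈ (Y \ X).filter (fun i => 0 < pr i), pr i * (q i t : ℤ)
          ≤ rpuT Trans pr q X t := by
        apply Finset.sum_le_sum_of_subset_of_nonneg
        · intro i hi
          simp only [mem_filter] at hi ⊢
          exact ⟨hYt (Finset.sdiff_subset hi.1), fun x hx => hsucc i hi.1 x hx, hi.2⟩
        · intro i hi _
          simp only [mem_filter] at hi
          exact mul_nonneg hi.2.2.le (by positivity)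
      have hdisj : Disjoint (X.filter (fun i => 0 < pr i)) ((Y \ X).filter (fun i => 0 < pr i)) :=
        Finset.disjoint_filter_filter (Finset.disjoint_sdiff)
      calc utilT pr q Y t ≤ ∑ i ∈ Y.filter (fun i => 0 < pr i), pr i * (q i t : ℤ) := h1
        _ = puT pr q X t + ∑ i ∈ (Y \ X).filter (fun i => 0 < pr i), pr i * (q i t : ℤ) := by
            rw [hsplit, Finset.sum_union hdisj]; rfl
        _ ≤ puT pr q X t + rpuT Trans pr q X t := by linarith
    have step2 : totU D Trans pr q Y
        ≤ ∑ t ∈ D.filter (fun t => Y ⊆ Trans t), (puT pr q X t + rpuT Trans pr q X t) :=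
      Finset.sum_le_sum step1
    have hsub : D.filter (fun t => Y ⊆ Trans t) ⊆ D.filter (fun t => X ⊆ Trans t) := by
      intro t ht
      simp only [mem_filter] at ht ⊢
      exact ⟨ht.1, hXY.trans ht.2⟩
    have hnn : ∀ t ∈ D.filter (fun t => X ⊆ Trans t),
        0 ≤ puT pr q X t + rpuT Trans pr q X t := by
      intro t _
      have h1 : 0 ≤ puT pr q X t := Finset.sum_nonneg fun i hi => by
        simp only [mem_filter] at hi
        exact mul_nonneg hi.2.le (by positivity)
      have h2 : 0 ≤ rpuT Trans pr q X t := Finset.sum_nonneg fun i hi => by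
        simp only [mem_filter] at hi
        exact mul_nonneg hi.2.2.le (by positivity)
      linarith
    have step3 : ∑ t ∈ D.filter (fun t => Y ⊆ Trans t), (puT pr q X t + rpuT Trans pr q X t)
        ≤ ∑ t ∈ D.filter (fun t => X ⊆ Trans t), (puT pr q X t + rpuT Trans pr q X t) :=
      Finset.sum_le_sum_of_subset_of_nonneg hsub (fun t ht _ => hnn t ht)
    calc totU D Trans pr q Y ≤ _ := step2
      _ ≤ _ := step3
      _ = SUMpu D Trans pr q X + SUMrpu D Trans pr q X := by
          rw [Finset.sum_add_distrib]; rfl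
  linarith
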